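/- Let p ∈ [4,6], a ≥ 0, and x ∈ ℝ with a² + x ≥ 0. Then (a² + x)^{p/2} ≤ a^p + (p/2) a^{p-2} x + (p(p-2)/8) a^{p-4} x² + (p(p-2)(p-4)/48) a^{p-6} x³, provided a > 0. -/

import Mathlib

open Set

lemma key_cubic_taylor (q : ℝ) (hq1 : 2 ≤ q) (hq2 : q ≤ 3) (s : ℝ) (hs : 0 ≤ s) :
    s ^ q ≤ 1 + q * (s - 1) + q * (q - 1) / 2 * (s - 1) ^ 2
      + q * (q - 1) * (q - 2) / 6 * (s - 1) ^ 3 := by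
  set F : ℝ → ℝ := fun t => 1 + q * (t - 1) + q * (q - 1) / 2 * (t - 1) ^ 2
      + q * (q - 1) * (q - 2) / 6 * (t - 1) ^ 3 - t ^ q with hFdef
  set F1 : ℝ → ℝ := fun t => q + q * (q - 1) * (t - 1)
      + q * (q - 1) * (q - 2) / 2 * (t - 1) ^ 2 - q * t ^ (q - 1) with hF1def
  set F2 : ℝ → ℝ := fun t => q * (q - 1) + q * (q - 1) * (q - 2) * (t - 1)
      - q * (q - 1) * t ^ (q - 2) with hF2def
  have hF : ∀ y : ℝ, HasDerivAt F (F1 y) y := by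
    intro y
    have h1 : HasDerivAt (fun t : ℝ => t - 1) 1 y := (hasDerivAt_id y).sub_const 1
    have hr : HasDerivAt (fun t : ℝ => t ^ q) (q * y ^ (q - 1)) y :=
      Real.hasDerivAt_rpow_const (Or.inr (by linarith))
    have h := ((((hasDerivAt_const y (1 : ℝ)).add (h1.const_mul q)).add
        ((h1.pow 2).const_mul (q * (q - 1) / 2))).add
        ((h1.pow 3).const_mul (q * (q - 1) * (q - 2) / 6))).sub hr
    refine h.congr_deriv ?_
    simp [hF1def]
    ring
  have hF1 : ∀ y : ℝ, HasDerivAt F1 (F2 y) y := by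
    intro y
    have h1 : HasDerivAt (fun t : ℝ => t - 1) 1 y := (hasDerivAt_id y).sub_const 1
    have hr : HasDerivAt (fun t : ℝ => t ^ (q - 1)) ((q - 1) * y ^ (q - 1 - 1)) y :=
      Real.hasDerivAt_rpow_const (Or.inr (by linarith))
    have h := ((((hasDerivAt_const y q).add (h1.const_mul (q * (q - 1)))).add
        ((h1.pow 2).const_mul (q * (q - 1) * (q - 2) / 2))).sub (hr.const_mul q))
    refine h.congr_deriv ?_
    simp [hF2def]
    ring_nf
  have hF2 : ∀ y : ℝ, 0 ≤ y → 0 ≤ F2 y := by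
    intro y hy
    have hb : (1 + (y - 1)) ^ (q - 2) ≤ 1 + (q - 2) * (y - 1) :=
      rpow_one_add_le_one_add_mul_self (by linarith) (by linarith) (by linarith)
    have hy' : (1 : ℝ) + (y - 1) = y := by ring
    rw [hy'] at hb
    have hqq : 0 ≤ q * (q - 1) := by nlinarith
    simp only [hF2def]
    nlinarith [mul_le_mul_of_nonneg_left hb hqq]
  -- F1 is monotone on [0, ∞)
  have hF1mono : MonotoneOn F1 (Ici (0 : ℝ)) := by
    apply monotoneOn_of_deriv_nonneg (convex_Ici 0)
    · exact fun y _ => ((hF1 y).differentiableAt.continuousAt).continuousWithinAt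
    · intro y hy
      exact (hF1 y).differentiableAt.differentiableWithinAt
    · intro y hy
      rw [(hF1 y).deriv]
      exact hF2 y (le_of_lt (by simpa using hy))
  have hF1one : F1 1 = 0 := by
    simp [hF1def, Real.one_rpow]
  have hFone : F 1 = 0 := by
    simp [hFdef, Real.one_rpow]
  have hkey : 0 ≤ F s := by
    rcases le_total s 1 with h | h
    · -- F antitone on [0,1]
      have hanti : AntitoneOn F (Icc (0 : ℝ) 1) := by
        apply antitoneOn_of_deriv_nonpos (convex_Icc 0 1)
        · exact fun y _ => ((hF y).differentiableAt.continuousAt).continuousWithinAt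
        · intro y hy
          exact (hF y).differentiableAt.differentiableWithinAt
        · intro y hy
          rw [interior_Icc] at hy
          rw [(hF y).deriv]
          have := hF1mono (mem_Ici.mpr hy.1.le) (mem_Ici.mpr zero_le_one) hy.2.le
          linarith [hF1one ▸ this]
      have := hanti (mem_Icc.mpr ⟨hs, h⟩) (mem_Icc.mpr ⟨zero_le_one, le_refl 1⟩) h
      linarith [hFone ▸ this]
    · -- F monotone on [1,∞)
      have hmono : MonotoneOn F (Ici (1 : ℝ)) := by
        apply monotoneOn_of_deriv_nonneg (convex_Ici 1)
        · exact fun y _ => ((hF y).differentiableAt.continuousAt).continuousWithinAt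
        · intro y hy
          exact (hF y).differentiableAt.differentiableWithinAt
        · intro y hy
          rw [interior_Ici] at hy
          rw [(hF y).deriv]
          have := hF1mono (mem_Ici.mpr zero_le_one) (mem_Ici.mpr (le_of_lt (by linarith [mem_Ioi.mp hy]))) (le_of_lt hy)
          linarith [hF1one ▸ this]
      have := hmono (mem_Ici.mpr (le_refl 1)) (mem_Ici.mpr h) h
      linarith [hFone ▸ this]
  simpa [hFdef, sub_nonneg] using hkey

theorem stmt_8 (p a x : ℝ) (hp1 : 4 ≤ p) (hp2 : p ≤ 6)
    (ha : 0 < a) (hx : 0 ≤ a ^ 2 + x) :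
    (a ^ 2 + x) ^ (p / 2) ≤
      a ^ p + p / 2 * a ^ (p - 2) * x + p * (p - 2) / 8 * a ^ (p - 4) * x ^ (2:ℕ)
        + p * (p - 2) * (p - 4) / 48 * a ^ (p - 6) * x ^ (3:ℕ) := by
  have hB : (0 : ℝ) < a ^ 2 := by positivity
  set s : ℝ := (a ^ 2 + x) / a ^ 2 with hsdef
  have hs : 0 ≤ s := div_nonneg hx hB.le
  set q : ℝ := p / 2 with hqdef
  have hq1 : 2 ≤ q := by simp [hqdef]; linarith
  have hq2 : q ≤ 3 := by simp [hqdef]; linarith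
  have hsplit : a ^ 2 + x = a ^ 2 * s := by
    rw [hsdef]; field_simp
  have hL : (a ^ 2 + x) ^ q = a ^ p * s ^ q := by
    rw [hsplit, Real.mul_rpow (by positivity) hs]
    congr 1
    rw [← Real.rpow_natCast a 2, ← Real.rpow_mul ha.le]
    congr 1
    simp [hqdef]
    ring
  have hkey := key_cubic_taylor q hq1 hq2 s hs
  have hAp : (0 : ℝ) ≤ a ^ p := (Real.rpow_pos_of_pos ha p).le
  have hmul := mul_le_mul_of_nonneg_left hkey hAp
  rw [← hL] at hmul
  refine le_trans hmul (le_of_eq ?_)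
  have hsub : s - 1 = x / a ^ 2 := by
    rw [hsdef]; field_simp; ring
  have e2 : a ^ (p - 2) = a ^ p / a ^ 2 := by
    rw [Real.rpow_sub ha, ← Real.rpow_natCast a 2]; norm_num
  have h4 : a ^ (4:ℝ) = (a ^ 2) ^ 2 := by
    rw [show (4:ℝ) = ((4:ℕ):ℝ) by norm_num, Real.rpow_natCast]; ring
  have h6 : a ^ (6:ℝ) = (a ^ 2) ^ 3 := by
    rw [show (6:ℝ) = ((6:ℕ):ℝ) by norm_num, Real.rpow_natCast]; ring
  have e4 : a ^ (p - 4) = a ^ p / (a ^ 2) ^ 2 := by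
    rw [Real.rpow_sub ha, h4]
  have e6 : a ^ (p - 6) = a ^ p / (a ^ 2) ^ 3 := by
    rw [Real.rpow_sub ha, h6]
  rw [hsub, e2, e4, e6, hqdef]
  field_simp
  ring
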